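/- Let u̇⁰ > 0, ε > 0, and let ρ be C¹ with support in [-1,1], δ_ε(x) = ε⁻¹ρ(x/ε). Let u, u* : J → ℝ be C¹ functions on an interval J with u(α) = u*(α) = -ε and derivatives in [u̇⁰/2, (3/2)u̇⁰]. If ‖u - u*‖_∞ > ε, then for all t ∈ J, |∫_α^t (δ_ε(u(s))·u(s) - δ_ε(u*(s))·u*(s)) ds| ≤ (8/u̇⁰)‖ρ‖_∞ · ‖u - u*‖_∞. -/
import Mathlib

open intervalIntegral

private lemma key_est (udot0 ε : ℝ) (hu : 0 < udot0) (hε : 0 < ε)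
    (ρ : ℝ → ℝ) (hρc : Continuous ρ)
    (hsupp : Function.support ρ ⊆ Set.Icc (-1) 1)
    (α b : ℝ) (_hab : α ≤ b)
    (w w' : ℝ → ℝ)
    (hwd : ∀ t ∈ Set.Icc α b, HasDerivAt w (w' t) t)
    (hwα : w α = -ε)
    (hwb : ∀ t ∈ Set.Icc α b, udot0 / 2 ≤ w' t)
    (R : ℝ) (hRb : ∀ x, |ρ x| ≤ R) :
    ∀ t ∈ Set.Icc α b, |∫ s in α..t, (ε⁻¹ * ρ (w s / ε)) * w s| ≤ R * (4 * ε / udot0) := by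
  have hR0 : 0 ≤ R := le_trans (abs_nonneg _) (hRb 0)
  -- continuity of w on Icc α b
  have hwc : ContinuousOn w (Set.Icc α b) :=
    fun s hs => ((hwd s hs).continuousAt).continuousWithinAt
  set g : ℝ → ℝ := fun s => (ε⁻¹ * ρ (w s / ε)) * w s with hg
  have hgc : ContinuousOn g (Set.Icc α b) := by
    apply ContinuousOn.mul
    · exact ContinuousOn.mul continuousOn_const
        (hρc.comp_continuousOn (hwc.div_const ε))
    · exact hwc
  -- pointwise bound |g s| ≤ R
  have hgb : ∀ s, |g s| ≤ R := by
    intro s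
    by_cases h : |w s| ≤ ε
    · have : |g s| = ε⁻¹ * |ρ (w s / ε)| * |w s| := by
        rw [hg]; simp [abs_mul, abs_of_pos (inv_pos.mpr hε)]
      rw [this]
      calc ε⁻¹ * |ρ (w s / ε)| * |w s| ≤ ε⁻¹ * R * ε := by
            apply mul_le_mul (mul_le_mul le_rfl (hRb _) (abs_nonneg _)
              (le_of_lt (inv_pos.mpr hε))) h (abs_nonneg _)
            positivity
        _ = R := by field_simp
    · have hws : w s / ε ∉ Set.Icc (-1 : ℝ) 1 := by
        push_neg at h
        intro hmem
        have : |w s / ε| ≤ 1 := abs_le.mpr hmem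
        rw [abs_div, abs_of_pos hε, div_le_one hε] at this
        linarith
      have : ρ (w s / ε) = 0 := by
        by_contra hne
        exact hws (hsupp (Function.mem_support.mpr hne))
      simp [hg, this, hR0]
  -- growth bound
  have hgrow : ∀ s ∈ Set.Icc α b, -ε + udot0 / 2 * (s - α) ≤ w s := by
    intro s hs
    have hmono : MonotoneOn (fun x => w x - udot0 / 2 * x) (Set.Icc α b) := by
      apply monotoneOn_of_hasDerivWithinAt_nonneg (convex_Icc α b)
        (f' := fun x => w' x - udot0 / 2)
      · exact ContinuousOn.sub hwc (by fun_prop)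
      · intro x hx
        have hx' : x ∈ Set.Icc α b := interior_subset hx
        exact ((hwd x hx').sub ((hasDerivAt_id x).const_mul (udot0 / 2)
          |>.congr_deriv (by ring))).hasDerivWithinAt
      · intro x hx
        have hx' : x ∈ Set.Icc α b := interior_subset hx
        linarith [hwb x hx']
    have h1 : w α - udot0 / 2 * α ≤ w s - udot0 / 2 * s :=
      hmono (Set.left_mem_Icc.mpr (hs.1.trans hs.2)) hs hs.1
    rw [hwα] at h1; linarith
  intro t ht
  set τ : ℝ := α + 4 * ε / udot0 with hτ
  have hτα : α < τ := by
    have h0 : 0 < 4 * ε / udot0 := by positivity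
    rw [hτ]; linarith
  -- zero on (τ, ∞)
  have hgz : ∀ s ∈ Set.Icc α b, τ < s → g s = 0 := by
    intro s hs hτs
    have h1 : ε < w s := by
      have := hgrow s hs
      have h2 : udot0 / 2 * (s - α) > udot0 / 2 * (4 * ε / udot0) := by
        apply mul_lt_mul_of_pos_left _ (by positivity)
        simp only [hτ] at hτs; linarith
      have h3 : udot0 / 2 * (4 * ε / udot0) = 2 * ε := by field_simp; ring
      linarith
    have hws : w s / ε ∉ Set.Icc (-1 : ℝ) 1 := by
      intro hmem
      have := hmem.2
      rw [div_le_one hε] at this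
      linarith
    have : ρ (w s / ε) = 0 := by
      by_contra hne
      exact hws (hsupp (Function.mem_support.mpr hne))
    simp [hg, this]
  by_cases htτ : t ≤ τ
  · calc |∫ s in α..t, g s| ≤ R * |t - α| := by
          have := intervalIntegral.norm_integral_le_of_norm_le_const
            (a := α) (b := t) (C := R) (f := g) (fun x _ => (hgb x).trans_eq' (Real.norm_eq_abs _))
          simpa [Real.norm_eq_abs] using this
      _ ≤ R * (4 * ε / udot0) := by
          apply mul_le_mul_of_nonneg_left _ hR0
          rw [abs_of_nonneg (by linarith [ht.1])]
          simp only [hτ] at htτ; linarith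
  · push_neg at htτ
    have hτmem : τ ∈ Set.Icc α b := ⟨le_of_lt hτα, le_trans (le_of_lt htτ) ht.2⟩
    have hint1 : IntervalIntegrable g MeasureTheory.volume α τ := by
      apply ContinuousOn.intervalIntegrable
      apply hgc.mono
      rw [Set.uIcc_of_le (le_of_lt hτα)]
      exact Set.Icc_subset_Icc le_rfl hτmem.2
    have hint2 : IntervalIntegrable g MeasureTheory.volume τ t := by
      apply ContinuousOn.intervalIntegrable
      apply hgc.mono
      rw [Set.uIcc_of_le (le_of_lt htτ)]
      exact Set.Icc_subset_Icc hτmem.1 ht.2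
    have hsplit : ∫ s in α..t, g s = (∫ s in α..τ, g s) + ∫ s in τ..t, g s :=
      (intervalIntegral.integral_add_adjacent_intervals hint1 hint2).symm
    have hzero : (∫ s in τ..t, g s) = 0 := by
      rw [intervalIntegral.integral_of_le (le_of_lt htτ)]
      rw [MeasureTheory.setIntegral_congr_fun measurableSet_Ioc
        (g := fun _ => (0 : ℝ))]
      · simp
      · intro s hs
        exact hgz s ⟨le_trans hτmem.1 (le_of_lt hs.1), hs.2.trans ht.2⟩ hs.1
    rw [hsplit, hzero, add_zero]
    calc |∫ s in α..τ, g s| ≤ R * |τ - α| := by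
          have := intervalIntegral.norm_integral_le_of_norm_le_const
            (a := α) (b := τ) (C := R) (f := g) (fun x _ => (hgb x).trans_eq' (Real.norm_eq_abs _))
          simpa [Real.norm_eq_abs] using this
      _ = R * (4 * ε / udot0) := by
          rw [abs_of_nonneg (by linarith)]; simp [hτ]

/-- Estimate for the difference of `δ_ε(u)u`-integrals of two curves
when their sup distance exceeds `ε`. -/
theorem stmt7 (udot0 ε : ℝ) (hu : 0 < udot0) (hε : 0 < ε)
    (ρ : ℝ → ℝ) (hρ : ContDiff ℝ 1 ρ)
    (hsupp : Function.support ρ ⊆ Set.Icc (-1) 1)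
    (α b : ℝ) (hab : α ≤ b)
    (u u' v v' : ℝ → ℝ)
    (hud : ∀ t ∈ Set.Icc α b, HasDerivAt u (u' t) t)
    (hvd : ∀ t ∈ Set.Icc α b, HasDerivAt v (v' t) t)
    (huα : u α = -ε) (hvα : v α = -ε)
    (hub : ∀ t ∈ Set.Icc α b, u' t ∈ Set.Icc (udot0 / 2) (3 / 2 * udot0))
    (hvb : ∀ t ∈ Set.Icc α b, v' t ∈ Set.Icc (udot0 / 2) (3 / 2 * udot0))
    (N : ℝ) (hN : N = sSup ((fun t => |u t - v t|) '' Set.Icc α b))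
    (R : ℝ) (hR : R = sSup (Set.range fun x => |ρ x|))
    (hNε : ε < N) :
    ∀ t ∈ Set.Icc α b,
      |∫ s in α..t, (ε⁻¹ * ρ (u s / ε)) * u s - (ε⁻¹ * ρ (v s / ε)) * v s| ≤
        (8 / udot0) * R * N := by
  have hρc : Continuous ρ := hρ.continuous
  -- R is an upper bound for |ρ|
  have hbdd : BddAbove (Set.range fun x => |ρ x|) := by
    obtain ⟨M, hM⟩ := (isCompact_Icc (a := (-1:ℝ)) (b := 1)).exists_bound_of_continuousOn
      (hρc.continuousOn (s := Set.Icc (-1) 1))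
    refine ⟨max M 0, ?_⟩
    rintro y ⟨x, rfl⟩
    by_cases hx : x ∈ Set.Icc (-1:ℝ) 1
    · exact le_max_of_le_left (by simpa using hM x hx)
    · have : ρ x = 0 := by
        by_contra hne
        exact hx (hsupp (Function.mem_support.mpr hne))
      simp [this]
  have hRb : ∀ x, |ρ x| ≤ R := by
    intro x
    rw [hR]
    exact le_csSup hbdd ⟨x, rfl⟩
  have hR0 : 0 ≤ R := le_trans (abs_nonneg _) (hRb 0)
  have hU := key_est udot0 ε hu hε ρ hρc hsupp α b hab u u' hud huα
    (fun t ht => (hub t ht).1) R hRb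
  have hV := key_est udot0 ε hu hε ρ hρc hsupp α b hab v v' hvd hvα
    (fun t ht => (hvb t ht).1) R hRb
  intro t ht
  have huc : ContinuousOn u (Set.Icc α b) :=
    fun s hs => ((hud s hs).continuousAt).continuousWithinAt
  have hvc : ContinuousOn v (Set.Icc α b) :=
    fun s hs => ((hvd s hs).continuousAt).continuousWithinAt
  have hsub : Set.uIcc α t ⊆ Set.Icc α b := by
    rw [Set.uIcc_of_le ht.1]
    exact Set.Icc_subset_Icc le_rfl ht.2
  have hint1 : IntervalIntegrable (fun s => (ε⁻¹ * ρ (u s / ε)) * u s)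
      MeasureTheory.volume α t := by
    apply ContinuousOn.intervalIntegrable
    apply ContinuousOn.mono _ hsub
    exact (continuousOn_const.mul (hρc.comp_continuousOn (huc.div_const ε))).mul huc
  have hint2 : IntervalIntegrable (fun s => (ε⁻¹ * ρ (v s / ε)) * v s)
      MeasureTheory.volume α t := by
    apply ContinuousOn.intervalIntegrable
    apply ContinuousOn.mono _ hsub
    exact (continuousOn_const.mul (hρc.comp_continuousOn (hvc.div_const ε))).mul hvc
  rw [intervalIntegral.integral_sub hint1 hint2]
  calc |(∫ s in α..t, (ε⁻¹ * ρ (u s / ε)) * u s) -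
          ∫ s in α..t, (ε⁻¹ * ρ (v s / ε)) * v s|
      ≤ |∫ s in α..t, (ε⁻¹ * ρ (u s / ε)) * u s| +
          |∫ s in α..t, (ε⁻¹ * ρ (v s / ε)) * v s| := abs_sub _ _
    _ ≤ R * (4 * ε / udot0) + R * (4 * ε / udot0) := add_le_add (hU t ht) (hV t ht)
    _ = (8 / udot0) * R * ε := by field_simp; ring
    _ ≤ (8 / udot0) * R * N := by
        apply mul_le_mul_of_nonneg_left (le_of_lt hNε)
        positivity
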